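/- (Theorem 3.) Suppose J(0, u) ≥ 0 for every control u, and let ε > 0. Then the perturbed Riccati recursion P^ε_N = H, P^ε_t = Q_t + A_t′P^ε_{t+1}A_t − (A_t′P^ε_{t+1}B_t + S_t′)(R_t + B_t′P^ε_{t+1}B_t + εI)^{−1}(B_t′P^ε_{t+1}A_t + S_t) is well defined, with R_t + B_t′P^ε_{t+1}B_t + εI ⪰ εI (hence invertible) for all t ∈ {0,…,N−1}. Moreover, with K^ε_t = −(R_t + B_t′P^ε_{t+1}B_t + εI)^{−1}(B_t′P^ε_{t+1}A_t + S_t), the pair (K^ε, 0) is a closed-loop optimal solution of Problem (LQ)_ε, and for each x₀ the control u^ε_t = K^ε_t x^ε_t (where x^ε₀ = x₀, x^ε_{t+1} = (A_t + B_t K^ε_t)x^ε_t) is the unique open-loop optimal control of Problem (LQ)_ε for x₀. -/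

import Mathlib

open Matrix Finset

noncomputable section

/-- State trajectory of the discrete-time linear system `x_{t+1} = A_t x_t + B_t u_t`. -/
def lqState {n m : ℕ} (A : ℕ → Matrix (Fin n) (Fin n) ℝ) (B : ℕ → Matrix (Fin n) (Fin m) ℝ)
    (x₀ : Fin n → ℝ) (u : ℕ → Fin m → ℝ) : ℕ → Fin n → ℝ
  | 0 => x₀
  | t + 1 => A t *ᵥ lqState A B x₀ u t + B t *ᵥ u t

/-- Quadratic cost `J(x₀, u)`. -/
def lqCost {n m : ℕ} (N : ℕ) (A : ℕ → Matrix (Fin n) (Fin n) ℝ)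
    (B : ℕ → Matrix (Fin n) (Fin m) ℝ) (Q : ℕ → Matrix (Fin n) (Fin n) ℝ)
    (R : ℕ → Matrix (Fin m) (Fin m) ℝ) (S : ℕ → Matrix (Fin m) (Fin n) ℝ)
    (H : Matrix (Fin n) (Fin n) ℝ) (x₀ : Fin n → ℝ) (u : ℕ → Fin m → ℝ) : ℝ :=
  (∑ t ∈ range N,
      (lqState A B x₀ u t ⬝ᵥ Q t *ᵥ lqState A B x₀ u t
        + 2 * (u t ⬝ᵥ S t *ᵥ lqState A B x₀ u t)
        + u t ⬝ᵥ R t *ᵥ u t))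
    + lqState A B x₀ u N ⬝ᵥ H *ᵥ lqState A B x₀ u N

/-- Closed-loop state `x_{t+1} = (A_t + B_t K_t) x_t + B_t v_t`. -/
def clState {n m : ℕ} (A : ℕ → Matrix (Fin n) (Fin n) ℝ) (B : ℕ → Matrix (Fin n) (Fin m) ℝ)
    (K : ℕ → Matrix (Fin m) (Fin n) ℝ) (v : ℕ → Fin m → ℝ) (x₀ : Fin n → ℝ) :
    ℕ → Fin n → ℝ
  | 0 => x₀
  | t + 1 => (A t + B t * K t) *ᵥ clState A B K v x₀ t + B t *ᵥ v t

/-- Outcome control `u_t = K_t x_t + v_t` of a closed-loop pair. -/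
def clControl {n m : ℕ} (A : ℕ → Matrix (Fin n) (Fin n) ℝ) (B : ℕ → Matrix (Fin n) (Fin m) ℝ)
    (K : ℕ → Matrix (Fin m) (Fin n) ℝ) (v : ℕ → Fin m → ℝ) (x₀ : Fin n → ℝ) (t : ℕ) :
    Fin m → ℝ :=
  K t *ᵥ clState A B K v x₀ t + v t


/-- Perturbed cost `J_ε(x₀,u) = J(x₀,u) + ε Σ|u_t|²`. -/
def lqCostPert {n m : ℕ} (N : ℕ) (A : ℕ → Matrix (Fin n) (Fin n) ℝ)
    (B : ℕ → Matrix (Fin n) (Fin m) ℝ) (Q : ℕ → Matrix (Fin n) (Fin n) ℝ)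
    (R : ℕ → Matrix (Fin m) (Fin m) ℝ) (S : ℕ → Matrix (Fin m) (Fin n) ℝ)
    (H : Matrix (Fin n) (Fin n) ℝ) (ε : ℝ) (x₀ : Fin n → ℝ) (u : ℕ → Fin m → ℝ) : ℝ :=
  lqCost N A B Q R S H x₀ u + ε * ∑ t ∈ range N, u t ⬝ᵥ u t

namespace LQAux
variable {n m : ℕ}

lemma dp_swap (C : Matrix (Fin n) (Fin m) ℝ) (a : Fin n → ℝ) (b : Fin m → ℝ) :
    a ⬝ᵥ C *ᵥ b = b ⬝ᵥ Cᵀ *ᵥ a := by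
  rw [Matrix.dotProduct_mulVec, Matrix.mulVec_transpose, dotProduct_comm]

lemma mv_dp (B : Matrix (Fin n) (Fin m) ℝ) (w : Fin m → ℝ) (z : Fin n → ℝ) :
    (B *ᵥ w) ⬝ᵥ z = w ⬝ᵥ Bᵀ *ᵥ z := by
  rw [dotProduct_comm, dp_swap]

lemma dp_self_nonneg (x : Fin m → ℝ) : 0 ≤ x ⬝ᵥ x := by
  simpa using dotProduct_star_self_nonneg x

lemma herm_of_symm {M : Matrix (Fin m) (Fin m) ℝ} (h : M.IsSymm) : M.IsHermitian := by
  rw [Matrix.IsHermitian, Matrix.conjTranspose_eq_transpose_of_trivial]; exact h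

lemma symm_smul_one (ε : ℝ) : (ε • (1 : Matrix (Fin m) (Fin m) ℝ)).IsSymm := by
  rw [Matrix.IsSymm, Matrix.transpose_smul, Matrix.transpose_one]

lemma psd_of (M : Matrix (Fin m) (Fin m) ℝ) (h : M.IsSymm)
    (h2 : ∀ x : Fin m → ℝ, 0 ≤ x ⬝ᵥ M *ᵥ x) : M.PosSemidef :=
  Matrix.PosSemidef.of_dotProduct_mulVec_nonneg (herm_of_symm h) fun x => by simpa using h2 x

lemma psd_quad {M : Matrix (Fin m) (Fin m) ℝ} (h : M.PosSemidef) (x : Fin m → ℝ) :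
    0 ≤ x ⬝ᵥ M *ᵥ x := by simpa using h.dotProduct_mulVec_nonneg x

lemma quad_add_smul (G : Matrix (Fin m) (Fin m) ℝ) (ε : ℝ) (x : Fin m → ℝ) :
    x ⬝ᵥ (G + ε • (1 : Matrix (Fin m) (Fin m) ℝ)) *ᵥ x = x ⬝ᵥ G *ᵥ x + ε * (x ⬝ᵥ x) := by
  rw [Matrix.add_mulVec, dotProduct_add, Matrix.smul_mulVec, Matrix.one_mulVec,
    dotProduct_smul, smul_eq_mul]

lemma isUnit_psd_add {G : Matrix (Fin m) (Fin m) ℝ} (hG : G.PosSemidef) {ε : ℝ} (hε : 0 < ε) :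
    IsUnit (G + ε • (1 : Matrix (Fin m) (Fin m) ℝ)) := by
  have hpd : (G + ε • (1 : Matrix (Fin m) (Fin m) ℝ)).PosDef := by
    refine Matrix.PosDef.of_dotProduct_mulVec_pos (hG.1.add (herm_of_symm (symm_smul_one ε))) fun x hx => ?_
    have h1 : (0:ℝ) < x ⬝ᵥ x := by
      rcases lt_or_eq_of_le (dp_self_nonneg x) with h | h
      · exact h
      · exact absurd (dotProduct_self_eq_zero.mp h.symm) hx
    have h3 := psd_quad hG x
    simp only [star_trivial]
    rw [quad_add_smul]
    nlinarith
  exact hpd.isUnit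

lemma key (Am : Matrix (Fin n) (Fin n) ℝ) (Bm : Matrix (Fin n) (Fin m) ℝ)
    (Qm : Matrix (Fin n) (Fin n) ℝ) (Rm : Matrix (Fin m) (Fin m) ℝ)
    (Sm : Matrix (Fin m) (Fin n) ℝ) (P : Matrix (Fin n) (Fin n) ℝ) (ε : ℝ)
    (hP : Pᵀ = P) (hRm : Rmᵀ = Rm)
    (hU : IsUnit (Rm + Bmᵀ*P*Bm + ε • (1 : Matrix (Fin m) (Fin m) ℝ)))
    (x : Fin n → ℝ) (u : Fin m → ℝ) :
    x ⬝ᵥ Qm *ᵥ x + 2*(u ⬝ᵥ Sm *ᵥ x) + u ⬝ᵥ Rm *ᵥ u + ε*(u ⬝ᵥ u)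
      + (Am *ᵥ x + Bm *ᵥ u) ⬝ᵥ P *ᵥ (Am *ᵥ x + Bm *ᵥ u)
    = x ⬝ᵥ (Qm + Amᵀ*P*Am
        - (Amᵀ*P*Bm + Smᵀ) * (Rm + Bmᵀ*P*Bm + ε • (1 : Matrix (Fin m) (Fin m) ℝ))⁻¹
          * (Bmᵀ*P*Am + Sm)) *ᵥ x
      + (u - (-((Rm + Bmᵀ*P*Bm + ε • (1 : Matrix (Fin m) (Fin m) ℝ))⁻¹
          * (Bmᵀ*P*Am + Sm))) *ᵥ x)
        ⬝ᵥ (Rm + Bmᵀ*P*Bm + ε • (1 : Matrix (Fin m) (Fin m) ℝ))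
        *ᵥ (u - (-((Rm + Bmᵀ*P*Bm + ε • (1 : Matrix (Fin m) (Fin m) ℝ))⁻¹
          * (Bmᵀ*P*Am + Sm))) *ᵥ x) := by
  simp only [Matrix.mul_assoc]
  set M : Matrix (Fin m) (Fin m) ℝ := Rm + Bmᵀ*(P*Bm) + ε • 1 with hMdef
  set L : Matrix (Fin m) (Fin n) ℝ := Bmᵀ*(P*Am) + Sm with hLdef
  have hMsymm : Mᵀ = M := by
    rw [hMdef]
    simp [Matrix.transpose_add, Matrix.transpose_mul, Matrix.transpose_transpose, hRm, hP,
      Matrix.transpose_smul, Matrix.mul_assoc]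
  have hLt : Amᵀ*(P*Bm) + Smᵀ = Lᵀ := by
    rw [hLdef]
    simp [Matrix.transpose_add, Matrix.transpose_mul, Matrix.transpose_transpose, hP,
      Matrix.mul_assoc]
  have hU' : IsUnit M := by
    have : Rm + Bmᵀ*P*Bm + ε • (1 : Matrix (Fin m) (Fin m) ℝ) = M := by
      rw [hMdef, Matrix.mul_assoc]
    rwa [this] at hU
  have hdet : IsUnit M.det := (Matrix.isUnit_iff_isUnit_det M).mp hU'
  have hMW : M * M⁻¹ = 1 := Matrix.mul_nonsing_inv M hdet
  have hWM : M⁻¹ * M = 1 := Matrix.nonsing_inv_mul M hdet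
  have hWt : M⁻¹ᵀ = M⁻¹ := by rw [Matrix.transpose_nonsing_inv, hMsymm]
  have hd : u - (-(M⁻¹ * L)) *ᵥ x = u + (M⁻¹ * L) *ᵥ x := by
    rw [Matrix.neg_mulVec, sub_neg_eq_add]
  rw [hLt, hd]
  have expand : ∀ {p : ℕ} (a b : Fin p → ℝ) (C : Matrix (Fin p) (Fin p) ℝ),
      (a + b) ⬝ᵥ C *ᵥ (a + b) = a ⬝ᵥ C *ᵥ a + a ⬝ᵥ C *ᵥ b + b ⬝ᵥ C *ᵥ a + b ⬝ᵥ C *ᵥ b := by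
    intro p a b C
    simp only [Matrix.mulVec_add, dotProduct_add, add_dotProduct]
    ring
  rw [expand, expand]
  have a1 : (Am *ᵥ x) ⬝ᵥ P *ᵥ (Am *ᵥ x) = x ⬝ᵥ (Amᵀ*(P*Am)) *ᵥ x := by
    rw [Matrix.mulVec_mulVec, mv_dp, Matrix.mulVec_mulVec]
  have a2 : (Am *ᵥ x) ⬝ᵥ P *ᵥ (Bm *ᵥ u) = u ⬝ᵥ (Bmᵀ*(P*Am)) *ᵥ x := by
    rw [Matrix.mulVec_mulVec, mv_dp, Matrix.mulVec_mulVec, dp_swap]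
    congr 1
    simp [Matrix.transpose_mul, Matrix.transpose_transpose, hP, Matrix.mul_assoc]
  have a3 : (Bm *ᵥ u) ⬝ᵥ P *ᵥ (Am *ᵥ x) = u ⬝ᵥ (Bmᵀ*(P*Am)) *ᵥ x := by
    rw [Matrix.mulVec_mulVec, mv_dp, Matrix.mulVec_mulVec]
  have a4 : (Bm *ᵥ u) ⬝ᵥ P *ᵥ (Bm *ᵥ u) = u ⬝ᵥ (Bmᵀ*(P*Bm)) *ᵥ u := by
    rw [Matrix.mulVec_mulVec, mv_dp, Matrix.mulVec_mulVec]
  have rhs1 : x ⬝ᵥ (Qm + Amᵀ*(P*Am) - Lᵀ * (M⁻¹*L)) *ᵥ x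
      = x ⬝ᵥ Qm *ᵥ x + x ⬝ᵥ (Amᵀ*(P*Am)) *ᵥ x - x ⬝ᵥ (Lᵀ*(M⁻¹*L)) *ᵥ x := by
    rw [Matrix.sub_mulVec, Matrix.add_mulVec, dotProduct_sub, dotProduct_add]
  have s1 : u ⬝ᵥ M *ᵥ ((M⁻¹*L) *ᵥ x) = u ⬝ᵥ L *ᵥ x := by
    rw [Matrix.mulVec_mulVec, ← Matrix.mul_assoc, hMW, Matrix.one_mul]
  have s2 : ((M⁻¹*L) *ᵥ x) ⬝ᵥ M *ᵥ u = u ⬝ᵥ L *ᵥ x := by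
    rw [mv_dp, Matrix.mulVec_mulVec]
    have h9 : (M⁻¹*L)ᵀ * M = Lᵀ := by
      rw [Matrix.transpose_mul, hWt, Matrix.mul_assoc, hWM, Matrix.mul_one]
    rw [h9, dp_swap, Matrix.transpose_transpose]
  have s3 : ((M⁻¹*L) *ᵥ x) ⬝ᵥ M *ᵥ ((M⁻¹*L) *ᵥ x) = x ⬝ᵥ (Lᵀ*(M⁻¹*L)) *ᵥ x := by
    simp only [Matrix.mulVec_mulVec]
    rw [mv_dp, Matrix.mulVec_mulVec]
    congr 2
    rw [Matrix.transpose_mul, hWt, ← Matrix.mul_assoc M, hMW, Matrix.one_mul, Matrix.mul_assoc]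
  have s4 : u ⬝ᵥ M *ᵥ u = u ⬝ᵥ Rm *ᵥ u + u ⬝ᵥ (Bmᵀ*(P*Bm)) *ᵥ u + ε*(u ⬝ᵥ u) := by
    rw [hMdef, Matrix.add_mulVec, Matrix.add_mulVec, dotProduct_add, dotProduct_add,
      Matrix.smul_mulVec, Matrix.one_mulVec, dotProduct_smul, smul_eq_mul]
  have s5 : u ⬝ᵥ L *ᵥ x = u ⬝ᵥ (Bmᵀ*(P*Am)) *ᵥ x + u ⬝ᵥ Sm *ᵥ x := by
    rw [hLdef, Matrix.add_mulVec, dotProduct_add]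
  rw [a1, a2, a3, a4, rhs1, s1, s2, s3, s4, s5]
  ring

variable (A : ℕ → Matrix (Fin n) (Fin n) ℝ) (B : ℕ → Matrix (Fin n) (Fin m) ℝ)
  (Q : ℕ → Matrix (Fin n) (Fin n) ℝ) (R : ℕ → Matrix (Fin m) (Fin m) ℝ)
  (S : ℕ → Matrix (Fin m) (Fin n) ℝ) (H : Matrix (Fin n) (Fin n) ℝ) (ε : ℝ)

/-- one Riccati step -/
def ric (t : ℕ) (M : Matrix (Fin n) (Fin n) ℝ) : Matrix (Fin n) (Fin n) ℝ :=
  Q t + (A t)ᵀ * M * A t -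
    ((A t)ᵀ * M * B t + (S t)ᵀ)
      * (R t + (B t)ᵀ * M * B t + ε • (1 : Matrix (Fin m) (Fin m) ℝ))⁻¹
      * ((B t)ᵀ * M * A t + S t)

def Pgo (N : ℕ) : ℕ → Matrix (Fin n) (Fin n) ℝ
  | 0 => H
  | k + 1 => ric A B Q R S ε (N - k - 1) (Pgo N k)

def Pmat (N : ℕ) (t : ℕ) : Matrix (Fin n) (Fin n) ℝ := Pgo A B Q R S H ε N (N - t)

lemma Pmat_of_le {N t : ℕ} (h : N ≤ t) : Pmat A B Q R S H ε N t = H := by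
  unfold Pmat
  rw [Nat.sub_eq_zero_of_le h]
  rfl

lemma Pmat_succ {N t : ℕ} (h : t < N) :
    Pmat A B Q R S H ε N t = ric A B Q R S ε t (Pmat A B Q R S H ε N (t + 1)) := by
  unfold Pmat
  have h1 : N - t = (N - (t + 1)) + 1 := by omega
  have h2 : N - (N - (t + 1)) - 1 = t := by omega
  rw [h1]
  show ric A B Q R S ε (N - (N - (t+1)) - 1) (Pgo A B Q R S H ε N (N - (t+1))) = _
  rw [h2]

/-- trajectory starting from state `x` at time `t₀` -/
def traj (t₀ : ℕ) (x : Fin n → ℝ) (u : ℕ → Fin m → ℝ) : ℕ → Fin n → ℝ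
  | 0 => x
  | t + 1 => if t + 1 ≤ t₀ then x else A t *ᵥ traj t₀ x u t + B t *ᵥ u t

lemma traj_of_le (t₀ : ℕ) (x : Fin n → ℝ) (u : ℕ → Fin m → ℝ) {t : ℕ} (h : t ≤ t₀) :
    traj A B t₀ x u t = x := by
  cases t with
  | zero => rfl
  | succ t => simp [traj, h]

lemma traj_zero_eq_lqState (x : Fin n → ℝ) (u : ℕ → Fin m → ℝ) (t : ℕ) :
    traj A B 0 x u t = lqState A B x u t := by
  induction t with
  | zero => rfl
  | succ t ih => simp [traj, lqState, ih]

lemma traj_congr (t₀ : ℕ) (x : Fin n → ℝ) (u u' : ℕ → Fin m → ℝ)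
    (h : ∀ s, t₀ ≤ s → u s = u' s) (t : ℕ) :
    traj A B t₀ x u t = traj A B t₀ x u' t := by
  induction t with
  | zero => rfl
  | succ t ih =>
    by_cases hle : t + 1 ≤ t₀
    · simp [traj, hle]
    · have ht : t₀ ≤ t := by omega
      simp [traj, hle, ih, h t ht]

lemma traj_shift (t₀ : ℕ) (x : Fin n → ℝ) (u : ℕ → Fin m → ℝ) (t : ℕ) (h : t₀ + 1 ≤ t) :
    traj A B t₀ x u t = traj A B (t₀ + 1) (A t₀ *ᵥ x + B t₀ *ᵥ u t₀) u t := by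
  induction t with
  | zero => omega
  | succ t ih =>
    by_cases heq : t + 1 = t₀ + 1
    · have ht : t = t₀ := by omega
      subst ht
      have h2 : ¬ (t + 1 ≤ t) := by omega
      simp [traj, h2, traj_of_le A B t x u (le_refl t)]
    · have h3 : t₀ + 1 ≤ t := by omega
      have h4 : ¬ (t + 1 ≤ t₀) := by omega
      have h5 : ¬ (t + 1 ≤ t₀ + 1) := by omega
      simp only [traj, if_neg h4, if_neg h5]
      rw [ih h3]

/-- cost-to-go from time `t₀` -/
def ctg (N t₀ : ℕ) (x : Fin n → ℝ) (u : ℕ → Fin m → ℝ) : ℝ :=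
  (∑ t ∈ Ico t₀ N,
    (traj A B t₀ x u t ⬝ᵥ Q t *ᵥ traj A B t₀ x u t
      + 2 * (u t ⬝ᵥ S t *ᵥ traj A B t₀ x u t)
      + u t ⬝ᵥ R t *ᵥ u t + ε * (u t ⬝ᵥ u t)))
  + traj A B t₀ x u N ⬝ᵥ H *ᵥ traj A B t₀ x u N

lemma ctg_zero_eq (N : ℕ) (x : Fin n → ℝ) (u : ℕ → Fin m → ℝ) :
    ctg A B Q R S H ε N 0 x u = lqCostPert N A B Q R S H ε x u := by
  unfold ctg lqCostPert lqCost
  simp only [traj_zero_eq_lqState]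
  rw [← Finset.range_eq_Ico, Finset.mul_sum, Finset.sum_add_distrib]
  ring

/-- matrices of the perturbed problem -/
def Mmat (N t : ℕ) : Matrix (Fin m) (Fin m) ℝ :=
  R t + (B t)ᵀ * Pmat A B Q R S H ε N (t + 1) * B t + ε • (1 : Matrix (Fin m) (Fin m) ℝ)

def Kmat (N t : ℕ) : Matrix (Fin m) (Fin n) ℝ :=
  -((Mmat A B Q R S H ε N t)⁻¹ * ((B t)ᵀ * Pmat A B Q R S H ε N (t + 1) * A t + S t))

/-- closed-loop trajectory from time `t₀` -/
def cltraj (K : ℕ → Matrix (Fin m) (Fin n) ℝ) (t₀ : ℕ) (y : Fin n → ℝ) : ℕ → Fin n → ℝ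
  | 0 => y
  | t + 1 => if t + 1 ≤ t₀ then y
      else A t *ᵥ cltraj K t₀ y t + B t *ᵥ (K t *ᵥ cltraj K t₀ y t)

def clctrl (K : ℕ → Matrix (Fin m) (Fin n) ℝ) (t₀ : ℕ) (y : Fin n → ℝ) (t : ℕ) : Fin m → ℝ :=
  K t *ᵥ cltraj A B K t₀ y t

lemma traj_clctrl (K : ℕ → Matrix (Fin m) (Fin n) ℝ) (t₀ : ℕ) (y : Fin n → ℝ) (t : ℕ) :
    traj A B t₀ y (clctrl A B K t₀ y) t = cltraj A B K t₀ y t := by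
  induction t with
  | zero => rfl
  | succ t ih =>
    by_cases hle : t + 1 ≤ t₀
    · simp [traj, cltraj, hle]
    · simp only [traj, cltraj, if_neg hle, clctrl, ih]

lemma ctg_congr (N t₀ : ℕ) (x : Fin n → ℝ) (u u' : ℕ → Fin m → ℝ)
    (h : ∀ s, t₀ ≤ s → u s = u' s) :
    ctg A B Q R S H ε N t₀ x u = ctg A B Q R S H ε N t₀ x u' := by
  unfold ctg
  congr 1
  · apply Finset.sum_congr rfl
    intro t ht
    rw [Finset.mem_Ico] at ht
    rw [traj_congr A B t₀ x u u' h, h t ht.1]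
  · rw [traj_congr A B t₀ x u u' h]

lemma ctg_peel (N t₀ : ℕ) (h : t₀ < N) (x : Fin n → ℝ) (u : ℕ → Fin m → ℝ) :
    ctg A B Q R S H ε N t₀ x u
      = (x ⬝ᵥ Q t₀ *ᵥ x + 2 * (u t₀ ⬝ᵥ S t₀ *ᵥ x) + u t₀ ⬝ᵥ R t₀ *ᵥ u t₀
          + ε * (u t₀ ⬝ᵥ u t₀))
        + ctg A B Q R S H ε N (t₀ + 1) (A t₀ *ᵥ x + B t₀ *ᵥ u t₀) u := by
  unfold ctg
  have hN : t₀ + 1 ≤ N := h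
  have htr : ∀ t ∈ Ico (t₀ + 1) N,
      traj A B t₀ x u t = traj A B (t₀ + 1) (A t₀ *ᵥ x + B t₀ *ᵥ u t₀) u t := by
    intro t ht
    rw [Finset.mem_Ico] at ht
    exact traj_shift A B t₀ x u t ht.1
  rw [Finset.sum_eq_sum_Ico_succ_bot h, traj_of_le A B t₀ x u (le_refl t₀),
    traj_shift A B t₀ x u N hN]
  rw [Finset.sum_congr rfl (fun t ht => by rw [htr t ht])]
  ring

lemma traj_zero_prefix (t₀ : ℕ) (u : ℕ → Fin m → ℝ) (hu : ∀ s, s < t₀ → u s = 0) (t : ℕ) :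
    traj A B 0 (0 : Fin n → ℝ) u t = traj A B t₀ (0 : Fin n → ℝ) u t := by
  induction t with
  | zero => rfl
  | succ t ih =>
    by_cases hle : t + 1 ≤ t₀
    · have h1 : ¬ (t + 1 ≤ 0) := by omega
      have h2 : traj A B t₀ (0 : Fin n → ℝ) u t = 0 := traj_of_le A B t₀ 0 u (by omega)
      simp [traj, h1, hle, ih, h2, hu t (by omega), Matrix.mulVec_zero]
    · have h1 : ¬ (t + 1 ≤ 0) := by omega
      simp only [traj, if_neg h1, if_neg hle, ih]

lemma ctg_zero_prefix (N t₀ : ℕ) (hN : t₀ ≤ N) (u : ℕ → Fin m → ℝ)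
    (hu : ∀ s, s < t₀ → u s = 0) :
    ctg A B Q R S H ε N 0 (0 : Fin n → ℝ) u = ctg A B Q R S H ε N t₀ (0 : Fin n → ℝ) u := by
  unfold ctg
  simp only [traj_zero_prefix A B t₀ u hu]
  congr 1
  rw [← Finset.sum_Ico_consecutive _ (Nat.zero_le t₀) hN]
  have hz : ∀ t ∈ Ico 0 t₀,
      (traj A B t₀ (0 : Fin n → ℝ) u t ⬝ᵥ Q t *ᵥ traj A B t₀ (0 : Fin n → ℝ) u t
        + 2 * (u t ⬝ᵥ S t *ᵥ traj A B t₀ (0 : Fin n → ℝ) u t)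
        + u t ⬝ᵥ R t *ᵥ u t + ε * (u t ⬝ᵥ u t)) = 0 := by
    intro t ht
    rw [Finset.mem_Ico] at ht
    rw [traj_of_le A B t₀ 0 u (by omega), hu t ht.2]
    simp
  rw [Finset.sum_congr rfl hz, Finset.sum_const_zero, zero_add]

lemma smul_one_psd (hε : 0 ≤ ε) : (ε • (1 : Matrix (Fin m) (Fin m) ℝ)).PosSemidef := by
  apply psd_of _ (symm_smul_one ε)
  intro x
  rw [Matrix.smul_mulVec, Matrix.one_mulVec, dotProduct_smul, smul_eq_mul]
  exact mul_nonneg hε (dp_self_nonneg x)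

/-- the main backward induction -/
lemma main (N : ℕ) (hQ : ∀ t, (Q t).IsSymm) (hR : ∀ t, (R t).IsSymm) (hH : H.IsSymm)
    (hε : 0 < ε)
    (hpos : ∀ u : ℕ → Fin m → ℝ, 0 ≤ lqCost N A B Q R S H 0 u) :
    ∀ k t₀, t₀ + k = N →
      ((Pmat A B Q R S H ε N t₀).IsSymm ∧
       (∀ t, t₀ ≤ t → t < N →
          (R t + (B t)ᵀ * Pmat A B Q R S H ε N (t + 1) * B t).PosSemidef) ∧
       (∀ (x : Fin n → ℝ) (u : ℕ → Fin m → ℝ), ctg A B Q R S H ε N t₀ x u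
          = x ⬝ᵥ Pmat A B Q R S H ε N t₀ *ᵥ x
            + ∑ t ∈ Ico t₀ N,
              ((u t - Kmat A B Q R S H ε N t *ᵥ traj A B t₀ x u t)
                ⬝ᵥ Mmat A B Q R S H ε N t
                *ᵥ (u t - Kmat A B Q R S H ε N t *ᵥ traj A B t₀ x u t)))) := by
  have hctg_lb : ∀ u : ℕ → Fin m → ℝ,
      ε * ∑ t ∈ range N, u t ⬝ᵥ u t ≤ ctg A B Q R S H ε N 0 (0 : Fin n → ℝ) u := by
    intro u
    rw [ctg_zero_eq]
    unfold lqCostPert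
    have := hpos u
    linarith
  intro k
  induction k with
  | zero =>
    intro t₀ ht₀
    have ht : t₀ = N := by omega
    subst ht
    refine ⟨?_, ?_, ?_⟩
    · rw [Pmat_of_le A B Q R S H ε (le_refl t₀)]; exact hH
    · intro t h1 h2; omega
    · intro x u
      unfold ctg
      rw [Finset.Ico_self, Finset.sum_empty, Finset.sum_empty,
        traj_of_le A B t₀ x u (le_refl t₀), Pmat_of_le A B Q R S H ε (le_refl t₀)]
      ring
  | succ k ih =>
    intro t₀ ht₀
    obtain ⟨ihSym, ihPSD, ihB⟩ := ih (t₀ + 1) (by omega)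
    have ht₀N : t₀ < N := by omega
    have hP1 : (Pmat A B Q R S H ε N (t₀ + 1))ᵀ = Pmat A B Q R S H ε N (t₀ + 1) := ihSym
    set P1 : Matrix (Fin n) (Fin n) ℝ := Pmat A B Q R S H ε N (t₀ + 1) with hP1def
    -- symmetry of G
    have hGsymm : (R t₀ + (B t₀)ᵀ * P1 * B t₀)ᵀ = R t₀ + (B t₀)ᵀ * P1 * B t₀ := by
      rw [Matrix.transpose_add, Matrix.transpose_mul, Matrix.transpose_mul,
        Matrix.transpose_transpose, hP1, (hR t₀), Matrix.mul_assoc]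
    -- G is PSD
    have hGpsd : (R t₀ + (B t₀)ᵀ * P1 * B t₀).PosSemidef := by
      apply psd_of _ hGsymm
      intro w
      set Km := Kmat A B Q R S H ε N with hKmdef
      set y : Fin n → ℝ := B t₀ *ᵥ w with hydef
      set ucl : ℕ → Fin m → ℝ := clctrl A B Km (t₀ + 1) y with hucl
      set ufull : ℕ → Fin m → ℝ :=
        fun s => if s < t₀ then 0 else if s = t₀ then w else ucl s with hufull
      have f1 : ∀ s, s < t₀ → ufull s = 0 := by
        intro s hs; simp [hufull, hs]
      have f2 : ufull t₀ = w := by simp [hufull]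
      have f3 : ∀ s, t₀ + 1 ≤ s → ufull s = ucl s := by
        intro s hs
        have h1 : ¬ (s < t₀) := by omega
        have h2 : ¬ (s = t₀) := by omega
        simp [hufull, h1, h2]
      have c1 : ε * (w ⬝ᵥ w) ≤ ε * ∑ t ∈ range N, ufull t ⬝ᵥ ufull t := by
        apply mul_le_mul_of_nonneg_left _ hε.le
        have := Finset.single_le_sum (f := fun t => ufull t ⬝ᵥ ufull t)
          (fun i _ => dp_self_nonneg (ufull i)) (Finset.mem_range.mpr ht₀N)
        simpa [f2] using this
      have c0 := hctg_lb ufull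
      have c2 : ctg A B Q R S H ε N 0 (0 : Fin n → ℝ) ufull
          = ctg A B Q R S H ε N t₀ (0 : Fin n → ℝ) ufull :=
        ctg_zero_prefix A B Q R S H ε N t₀ ht₀N.le ufull f1
      have c3 := ctg_peel A B Q R S H ε N t₀ ht₀N (0 : Fin n → ℝ) ufull
      have c4 : ctg A B Q R S H ε N (t₀ + 1) (A t₀ *ᵥ (0 : Fin n → ℝ) + B t₀ *ᵥ ufull t₀) ufull
          = ctg A B Q R S H ε N (t₀ + 1) y ucl := by
        rw [Matrix.mulVec_zero, zero_add, f2, ← hydef]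
        exact ctg_congr A B Q R S H ε N (t₀ + 1) y ufull ucl f3
      have c5 : ctg A B Q R S H ε N (t₀ + 1) y ucl = y ⬝ᵥ P1 *ᵥ y := by
        rw [ihB y ucl]
        have hz : ∀ t ∈ Ico (t₀ + 1) N,
            ((ucl t - Km t *ᵥ traj A B (t₀ + 1) y ucl t)
              ⬝ᵥ Mmat A B Q R S H ε N t
              *ᵥ (ucl t - Km t *ᵥ traj A B (t₀ + 1) y ucl t)) = 0 := by
          intro t ht
          have hd : ucl t - Km t *ᵥ traj A B (t₀ + 1) y ucl t = 0 := by
            rw [hucl, traj_clctrl]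
            show clctrl A B Km (t₀ + 1) y t - _ = 0
            rw [clctrl, sub_self]
          rw [hd]
          simp
        rw [Finset.sum_congr rfl hz, Finset.sum_const_zero, add_zero, hP1def]
      have c6 : y ⬝ᵥ P1 *ᵥ y = w ⬝ᵥ ((B t₀)ᵀ * (P1 * B t₀)) *ᵥ w := by
        rw [hydef, Matrix.mulVec_mulVec, mv_dp, Matrix.mulVec_mulVec]
      have c7 : w ⬝ᵥ (R t₀ + (B t₀)ᵀ * P1 * B t₀) *ᵥ w
          = w ⬝ᵥ R t₀ *ᵥ w + w ⬝ᵥ ((B t₀)ᵀ * (P1 * B t₀)) *ᵥ w := by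
        rw [Matrix.add_mulVec, dotProduct_add, Matrix.mul_assoc]
      -- stage cost at t₀ from state 0
      have c8 : (0 : Fin n → ℝ) ⬝ᵥ Q t₀ *ᵥ (0 : Fin n → ℝ)
          + 2 * (ufull t₀ ⬝ᵥ S t₀ *ᵥ (0 : Fin n → ℝ)) + ufull t₀ ⬝ᵥ R t₀ *ᵥ ufull t₀
          + ε * (ufull t₀ ⬝ᵥ ufull t₀)
          = w ⬝ᵥ R t₀ *ᵥ w + ε * (w ⬝ᵥ w) := by
        rw [f2]
        simp
      rw [c2, c3, c4, c5, c8] at c0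
      rw [c7]
      rw [c6] at c0
      linarith
    -- invertibility
    have hU : IsUnit (R t₀ + (B t₀)ᵀ * P1 * B t₀ + ε • (1 : Matrix (Fin m) (Fin m) ℝ)) :=
      isUnit_psd_add hGpsd hε
    have hMM : Mmat A B Q R S H ε N t₀
        = R t₀ + (B t₀)ᵀ * P1 * B t₀ + ε • (1 : Matrix (Fin m) (Fin m) ℝ) := rfl
    have hMsymm : (R t₀ + (B t₀)ᵀ * P1 * B t₀ + ε • (1 : Matrix (Fin m) (Fin m) ℝ))ᵀ
        = R t₀ + (B t₀)ᵀ * P1 * B t₀ + ε • (1 : Matrix (Fin m) (Fin m) ℝ) := by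
      rw [Matrix.transpose_add, hGsymm, Matrix.transpose_smul, Matrix.transpose_one]
    -- symmetry of P t₀
    have hPsym : (Pmat A B Q R S H ε N t₀).IsSymm := by
      rw [Pmat_succ A B Q R S H ε ht₀N]
      show (ric A B Q R S ε t₀ P1)ᵀ = ric A B Q R S ε t₀ P1
      unfold ric
      rw [Matrix.transpose_sub, Matrix.transpose_add, Matrix.transpose_mul,
        Matrix.transpose_mul, Matrix.transpose_mul, Matrix.transpose_mul,
        Matrix.transpose_transpose, hP1, (hQ t₀),
        Matrix.transpose_add, Matrix.transpose_add, Matrix.transpose_mul,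
        Matrix.transpose_mul, Matrix.transpose_mul, Matrix.transpose_mul,
        Matrix.transpose_transpose, Matrix.transpose_transpose,
        Matrix.transpose_transpose, hP1,
        Matrix.transpose_nonsing_inv, hMsymm]
      simp [Matrix.mul_assoc]
    refine ⟨hPsym, ?_, ?_⟩
    · intro t h1 h2
      rcases Nat.eq_or_lt_of_le h1 with he | hlt
      · rw [← he]; exact hGpsd
      · exact ihPSD t hlt h2
    · intro x u
      rw [ctg_peel A B Q R S H ε N t₀ ht₀N x u,
        ihB (A t₀ *ᵥ x + B t₀ *ᵥ u t₀) u,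
        Finset.sum_eq_sum_Ico_succ_bot ht₀N]
      have htr : ∀ t ∈ Ico (t₀ + 1) N,
          ((u t - Kmat A B Q R S H ε N t *ᵥ traj A B (t₀ + 1) (A t₀ *ᵥ x + B t₀ *ᵥ u t₀) u t)
            ⬝ᵥ Mmat A B Q R S H ε N t
            *ᵥ (u t - Kmat A B Q R S H ε N t
                *ᵥ traj A B (t₀ + 1) (A t₀ *ᵥ x + B t₀ *ᵥ u t₀) u t))
          = ((u t - Kmat A B Q R S H ε N t *ᵥ traj A B t₀ x u t)
            ⬝ᵥ Mmat A B Q R S H ε N t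
            *ᵥ (u t - Kmat A B Q R S H ε N t *ᵥ traj A B t₀ x u t)) := by
        intro t ht
        rw [Finset.mem_Ico] at ht
        rw [← traj_shift A B t₀ x u t ht.1]
      rw [Finset.sum_congr rfl htr, traj_of_le A B t₀ x u (le_refl t₀)]
      have hkey := key (A t₀) (B t₀) (Q t₀) (R t₀) (S t₀) P1 ε hP1 (hR t₀) hU x (u t₀)
      rw [Pmat_succ A B Q R S H ε ht₀N]
      show _ = x ⬝ᵥ (ric A B Q R S ε t₀ P1) *ᵥ x + _
      unfold ric
      rw [show Kmat A B Q R S H ε N t₀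
          = -((R t₀ + (B t₀)ᵀ * P1 * B t₀ + ε • (1 : Matrix (Fin m) (Fin m) ℝ))⁻¹
              * ((B t₀)ᵀ * P1 * A t₀ + S t₀)) from rfl, hMM]
      linarith

lemma lqState_clControl (K : ℕ → Matrix (Fin m) (Fin n) ℝ) (x₀ : Fin n → ℝ) (t : ℕ) :
    lqState A B x₀ (clControl A B K (fun _ => 0) x₀) t
      = clState A B K (fun _ => 0) x₀ t := by
  induction t with
  | zero => rfl
  | succ t ih =>
    show A t *ᵥ lqState A B x₀ (clControl A B K (fun _ => 0) x₀) t
        + B t *ᵥ (K t *ᵥ clState A B K (fun _ => 0) x₀ t + 0) = _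
    rw [ih]
    show _ = (A t + B t * K t) *ᵥ clState A B K (fun _ => 0) x₀ t + B t *ᵥ (0 : Fin m → ℝ)
    rw [Matrix.add_mulVec, Matrix.mulVec_zero, add_zero, add_zero, ← Matrix.mulVec_mulVec]

lemma val_cl (N : ℕ) (hQ : ∀ t, (Q t).IsSymm) (hR : ∀ t, (R t).IsSymm) (hH : H.IsSymm)
    (hε : 0 < ε) (hpos : ∀ u : ℕ → Fin m → ℝ, 0 ≤ lqCost N A B Q R S H 0 u) (x₀ : Fin n → ℝ) :
    lqCostPert N A B Q R S H ε x₀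
      (clControl A B (Kmat A B Q R S H ε N) (fun _ => 0) x₀)
    = x₀ ⬝ᵥ Pmat A B Q R S H ε N 0 *ᵥ x₀ := by
  obtain ⟨_, _, hB⟩ := main A B Q R S H ε N hQ hR hH hε hpos N 0 (by omega)
  rw [← ctg_zero_eq, hB]
  have hz : ∀ t ∈ Ico 0 N,
      ((clControl A B (Kmat A B Q R S H ε N) (fun _ => 0) x₀ t
          - Kmat A B Q R S H ε N t
            *ᵥ traj A B 0 x₀ (clControl A B (Kmat A B Q R S H ε N) (fun _ => 0) x₀) t)
        ⬝ᵥ Mmat A B Q R S H ε N t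
        *ᵥ (clControl A B (Kmat A B Q R S H ε N) (fun _ => 0) x₀ t
          - Kmat A B Q R S H ε N t
            *ᵥ traj A B 0 x₀ (clControl A B (Kmat A B Q R S H ε N) (fun _ => 0) x₀) t)) = 0 := by
    intro t _
    have hd : clControl A B (Kmat A B Q R S H ε N) (fun _ => 0) x₀ t
        - Kmat A B Q R S H ε N t
          *ᵥ traj A B 0 x₀ (clControl A B (Kmat A B Q R S H ε N) (fun _ => 0) x₀) t = 0 := by
      rw [traj_zero_eq_lqState, lqState_clControl]
      show Kmat A B Q R S H ε N t *ᵥ _ + 0 - _ = 0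
      rw [add_zero, sub_self]
    rw [hd]
    simp
  rw [Finset.sum_congr rfl hz, Finset.sum_const_zero, add_zero]

lemma optimal (N : ℕ) (hQ : ∀ t, (Q t).IsSymm) (hR : ∀ t, (R t).IsSymm) (hH : H.IsSymm)
    (hε : 0 < ε) (hpos : ∀ u : ℕ → Fin m → ℝ, 0 ≤ lqCost N A B Q R S H 0 u)
    (x₀ : Fin n → ℝ) (u : ℕ → Fin m → ℝ) :
    lqCostPert N A B Q R S H ε x₀
      (clControl A B (Kmat A B Q R S H ε N) (fun _ => 0) x₀)
    ≤ lqCostPert N A B Q R S H ε x₀ u := by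
  obtain ⟨_, hPSD, hB⟩ := main A B Q R S H ε N hQ hR hH hε hpos N 0 (by omega)
  rw [val_cl A B Q R S H ε N hQ hR hH hε hpos x₀, ← ctg_zero_eq, hB]
  have hnn : ∀ t ∈ Ico 0 N, (0:ℝ)
      ≤ ((u t - Kmat A B Q R S H ε N t *ᵥ traj A B 0 x₀ u t)
        ⬝ᵥ Mmat A B Q R S H ε N t
        *ᵥ (u t - Kmat A B Q R S H ε N t *ᵥ traj A B 0 x₀ u t)) := by
    intro t ht
    rw [Finset.mem_Ico] at ht
    have hMpsd : (Mmat A B Q R S H ε N t).PosSemidef :=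
      (hPSD t (Nat.zero_le t) ht.2).add (smul_one_psd ε hε.le)
    exact psd_quad hMpsd _
  have := Finset.sum_nonneg hnn
  linarith

lemma uniq (N : ℕ) (hQ : ∀ t, (Q t).IsSymm) (hR : ∀ t, (R t).IsSymm) (hH : H.IsSymm)
    (hε : 0 < ε) (hpos : ∀ u : ℕ → Fin m → ℝ, 0 ≤ lqCost N A B Q R S H 0 u)
    (x₀ : Fin n → ℝ) (ubar : ℕ → Fin m → ℝ)
    (hopt : ∀ u : ℕ → Fin m → ℝ,
      lqCostPert N A B Q R S H ε x₀ ubar ≤ lqCostPert N A B Q R S H ε x₀ u) :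
    ∀ t < N, ubar t = clControl A B (Kmat A B Q R S H ε N) (fun _ => 0) x₀ t := by
  obtain ⟨_, hPSD, hB⟩ := main A B Q R S H ε N hQ hR hH hε hpos N 0 (by omega)
  have hub := hopt (clControl A B (Kmat A B Q R S H ε N) (fun _ => 0) x₀)
  rw [val_cl A B Q R S H ε N hQ hR hH hε hpos x₀, ← ctg_zero_eq, hB] at hub
  have hnn : ∀ t ∈ Ico 0 N, (0:ℝ)
      ≤ ((ubar t - Kmat A B Q R S H ε N t *ᵥ traj A B 0 x₀ ubar t)
        ⬝ᵥ Mmat A B Q R S H ε N t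
        *ᵥ (ubar t - Kmat A B Q R S H ε N t *ᵥ traj A B 0 x₀ ubar t)) := by
    intro t ht
    rw [Finset.mem_Ico] at ht
    have hMpsd : (Mmat A B Q R S H ε N t).PosSemidef :=
      (hPSD t (Nat.zero_le t) ht.2).add (smul_one_psd ε hε.le)
    exact psd_quad hMpsd _
  have hsum0 : ∑ t ∈ Ico 0 N,
      ((ubar t - Kmat A B Q R S H ε N t *ᵥ traj A B 0 x₀ ubar t)
        ⬝ᵥ Mmat A B Q R S H ε N t
        *ᵥ (ubar t - Kmat A B Q R S H ε N t *ᵥ traj A B 0 x₀ ubar t)) = 0 := by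
    have h1 := Finset.sum_nonneg hnn
    linarith
  have hterm0 : ∀ t < N,
      ((ubar t - Kmat A B Q R S H ε N t *ᵥ traj A B 0 x₀ ubar t)
        ⬝ᵥ Mmat A B Q R S H ε N t
        *ᵥ (ubar t - Kmat A B Q R S H ε N t *ᵥ traj A B 0 x₀ ubar t)) = 0 := by
    intro t ht
    have := (Finset.sum_eq_zero_iff_of_nonneg hnn).mp hsum0 t
      (Finset.mem_Ico.mpr ⟨Nat.zero_le t, ht⟩)
    exact this
  have hd0 : ∀ t < N, ubar t = Kmat A B Q R S H ε N t *ᵥ lqState A B x₀ ubar t := by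
    intro t ht
    set d : Fin m → ℝ := ubar t - Kmat A B Q R S H ε N t *ᵥ traj A B 0 x₀ ubar t with hd
    have hq := hterm0 t ht
    have hGq : (0:ℝ) ≤ d ⬝ᵥ (R t + (B t)ᵀ * Pmat A B Q R S H ε N (t + 1) * B t) *ᵥ d :=
      psd_quad (hPSD t (Nat.zero_le t) ht) d
    have hMq : d ⬝ᵥ Mmat A B Q R S H ε N t *ᵥ d
        = d ⬝ᵥ (R t + (B t)ᵀ * Pmat A B Q R S H ε N (t + 1) * B t) *ᵥ d + ε * (d ⬝ᵥ d) :=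
      quad_add_smul _ ε d
    have hdd : d ⬝ᵥ d = 0 := by
      have h5 := dp_self_nonneg d
      nlinarith [hq, hGq, hMq]
    have hdz : d = 0 := dotProduct_self_eq_zero.mp hdd
    have := sub_eq_zero.mp hdz
    rwa [traj_zero_eq_lqState] at this
  have hstate : ∀ t, t ≤ N →
      lqState A B x₀ ubar t
        = clState A B (Kmat A B Q R S H ε N) (fun _ => 0) x₀ t := by
    intro t
    induction t with
    | zero => intro _; rfl
    | succ t ih =>
      intro ht
      have ih' := ih (by omega)
      show A t *ᵥ lqState A B x₀ ubar t + B t *ᵥ ubar t = _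
      rw [hd0 t (by omega), ih']
      show _ = (A t + B t * Kmat A B Q R S H ε N t)
          *ᵥ clState A B (Kmat A B Q R S H ε N) (fun _ => 0) x₀ t + B t *ᵥ (0 : Fin m → ℝ)
      rw [Matrix.add_mulVec, Matrix.mulVec_zero, add_zero, ← Matrix.mulVec_mulVec]
  intro t ht
  rw [hd0 t ht, hstate t ht.le]
  show _ = Kmat A B Q R S H ε N t *ᵥ _ + 0
  rw [add_zero]

end LQAux


/-- Theorem 3: the perturbed Riccati recursion is well defined, with
`R_t + B_t′P^ε_{t+1}B_t + εI ⪰ εI` (hence invertible); the resulting `(K^ε, 0)` is a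
closed-loop optimal solution of Problem (LQ)_ε and its outcome is the unique open-loop
optimal control of Problem (LQ)_ε. -/
theorem stmt_8 {n m : ℕ} (hn : 0 < n) (hm : 0 < m) (N : ℕ) (hN : 0 < N)
    (A : ℕ → Matrix (Fin n) (Fin n) ℝ) (B : ℕ → Matrix (Fin n) (Fin m) ℝ)
    (Q : ℕ → Matrix (Fin n) (Fin n) ℝ) (R : ℕ → Matrix (Fin m) (Fin m) ℝ)
    (S : ℕ → Matrix (Fin m) (Fin n) ℝ) (H : Matrix (Fin n) (Fin n) ℝ)
    (hQ : ∀ t, (Q t).IsSymm) (hR : ∀ t, (R t).IsSymm) (hH : H.IsSymm)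
    (hpos : ∀ u : ℕ → Fin m → ℝ, 0 ≤ lqCost N A B Q R S H 0 u)
    (ε : ℝ) (hε : 0 < ε) :
    ∃ P : ℕ → Matrix (Fin n) (Fin n) ℝ,
      (∀ t ≤ N, (P t).IsSymm) ∧ P N = H ∧
      (∀ t < N,
        (R t + (B t)ᵀ * P (t + 1) * B t).PosSemidef ∧
        IsUnit (R t + (B t)ᵀ * P (t + 1) * B t + ε • (1 : Matrix (Fin m) (Fin m) ℝ)) ∧
        P t = Q t + (A t)ᵀ * P (t + 1) * A t
          - ((A t)ᵀ * P (t + 1) * B t + (S t)ᵀ)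
            * (R t + (B t)ᵀ * P (t + 1) * B t + ε • (1 : Matrix (Fin m) (Fin m) ℝ))⁻¹
            * ((B t)ᵀ * P (t + 1) * A t + S t)) ∧
      (let K : ℕ → Matrix (Fin m) (Fin n) ℝ := fun t =>
          -((R t + (B t)ᵀ * P (t + 1) * B t + ε • (1 : Matrix (Fin m) (Fin m) ℝ))⁻¹
            * ((B t)ᵀ * P (t + 1) * A t + S t))
       (∀ x₀ : Fin n → ℝ, ∀ u : ℕ → Fin m → ℝ,
          lqCostPert N A B Q R S H ε x₀ (clControl A B K (fun _ => 0) x₀)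
            ≤ lqCostPert N A B Q R S H ε x₀ u) ∧
       (∀ x₀ : Fin n → ℝ, ∀ ubar : ℕ → Fin m → ℝ,
          (∀ u : ℕ → Fin m → ℝ,
            lqCostPert N A B Q R S H ε x₀ ubar ≤ lqCostPert N A B Q R S H ε x₀ u) →
          ∀ t < N, ubar t = clControl A B K (fun _ => 0) x₀ t)) := by
  refine ⟨LQAux.Pmat A B Q R S H ε N, ?_, ?_, ?_, ?_, ?_⟩
  · intro t ht
    exact (LQAux.main A B Q R S H ε N hQ hR hH hε hpos (N - t) t (by omega)).1
  · exact LQAux.Pmat_of_le A B Q R S H ε (le_refl N)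
  · intro t ht
    obtain ⟨_, hPSD, _⟩ := LQAux.main A B Q R S H ε N hQ hR hH hε hpos N 0 (by omega)
    have hpsd := hPSD t (Nat.zero_le t) ht
    exact ⟨hpsd, LQAux.isUnit_psd_add hpsd hε, LQAux.Pmat_succ A B Q R S H ε ht⟩
  · exact fun x₀ u => LQAux.optimal A B Q R S H ε N hQ hR hH hε hpos x₀ u
  · exact fun x₀ ubar h t ht => LQAux.uniq A B Q R S H ε N hQ hR hH hε hpos x₀ ubar h t ht
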